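/- Iterated integral identity: for p ∈ (0,1) and integers 1 ≤ n₀ < n, the Lebesgue volume of {x ∈ ℝ^{n-1} : x_i ≥ 0, Σ_{i=1}^{n-1} x_i ≤ 1, Σ_{i=1}^{n₀} x_i ≤ p} equals (1/(n-1)!)[1 - (1-p)^{n-1}] - Σ_{j=1}^{n₀-1} (1-p)^{n-1-j} p^j / (j! (n-1-j)!). -/

import Mathlib

open MeasureTheory

namespace CornerSimplexAux

noncomputable def trm (m : ℕ) (p b : ℝ) (j : ℕ) : ℝ :=
  p ^ j * (b - p) ^ (m - j) / (Nat.factorial j * Nat.factorial (m - j))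

lemma trm_nonneg {m : ℕ} {p b : ℝ} (hp : 0 ≤ p) (hpb : p ≤ b) (j : ℕ) :
    0 ≤ trm m p b j := by
  unfold trm
  have h : (0:ℝ) ≤ b - p := by linarith
  positivity

def cset (m k : ℕ) (p b : ℝ) : Set (Fin m → ℝ) :=
  {x | (∀ i, 0 ≤ x i) ∧ (∑ i ∈ Finset.univ.filter (fun i : Fin m => (i : ℕ) < k), x i ≤ p)
      ∧ (∑ i, x i ≤ b)}

lemma measurableSet_cset (m k : ℕ) (p b : ℝ) : MeasurableSet (cset m k p b) := by
  have h1 : MeasurableSet {x : Fin m → ℝ | ∀ i, 0 ≤ x i} := by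
    rw [Set.setOf_forall]
    exact MeasurableSet.iInter fun i =>
      measurableSet_le measurable_const (measurable_pi_apply i)
  have h2 : MeasurableSet {x : Fin m → ℝ |
      ∑ i ∈ Finset.univ.filter (fun i : Fin m => (i : ℕ) < k), x i ≤ p} :=
    measurableSet_le (Finset.measurable_sum _ fun i _ => measurable_pi_apply i) measurable_const
  have h3 : MeasurableSet {x : Fin m → ℝ | ∑ i, x i ≤ b} :=
    measurableSet_le (Finset.measurable_sum _ fun i _ => measurable_pi_apply i) measurable_const
  exact h1.inter (h2.inter h3)

lemma lint_Ioc {f : ℝ → ℝ} (hf : Continuous f) {a c : ℝ} (hac : a ≤ c)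
    (hnn : ∀ t ∈ Set.Ioc a c, 0 ≤ f t) :
    ∫⁻ t in Set.Ioc a c, ENNReal.ofReal (f t) = ENNReal.ofReal (∫ t in a..c, f t) := by
  rw [intervalIntegral.integral_of_le hac,
    ← ofReal_integral_eq_lintegral_ofReal hf.integrableOn_Ioc
      ((ae_restrict_iff' measurableSet_Ioc).2 (Filter.Eventually.of_forall hnn))]

lemma integral_sub_pow (a b : ℝ) (e : ℕ) :
    ∫ t in a..b, (b - t) ^ e = (b - a) ^ (e + 1) / (e + 1) := by
  rw [intervalIntegral.integral_comp_sub_left (fun x => x ^ e) b]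
  simp [integral_pow]

lemma lintegral_two_piece {G : ℝ → ENNReal} {f₁ f₂ : ℝ → ℝ} {c₁ c₂ : ℝ}
    (h₁ : 0 ≤ c₁) (h₂ : c₁ ≤ c₂)
    (hf₁ : Continuous f₁) (hf₂ : Continuous f₂)
    (hn₁ : ∀ t ∈ Set.Ioc 0 c₁, 0 ≤ f₁ t) (hn₂ : ∀ t ∈ Set.Ioc c₁ c₂, 0 ≤ f₂ t)
    (hG1 : ∀ t ∈ Set.Ioc 0 c₁, G t = ENNReal.ofReal (f₁ t))
    (hG2 : ∀ t ∈ Set.Ioc c₁ c₂, G t = ENNReal.ofReal (f₂ t))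
    (hG0 : ∀ t : ℝ, t ≠ 0 → t ∉ Set.Ioc 0 c₁ → t ∉ Set.Ioc c₁ c₂ → G t = 0) :
    ∫⁻ t, G t = ENNReal.ofReal (∫ t in (0:ℝ)..c₁, f₁ t)
      + ENNReal.ofReal (∫ t in c₁..c₂, f₂ t) := by
  have hae : G =ᵐ[volume] (Set.indicator (Set.Ioc 0 c₁) (fun t => ENNReal.ofReal (f₁ t)) +
      Set.indicator (Set.Ioc c₁ c₂) (fun t => ENNReal.ofReal (f₂ t))) := by
    rw [Filter.EventuallyEq, ae_iff]
    refine measure_mono_null (fun t ht => ?_) (measure_singleton (0:ℝ))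
    simp only [Set.mem_setOf_eq, Pi.add_apply] at ht
    simp only [Set.mem_singleton_iff]
    by_contra h0
    apply ht
    by_cases m1 : t ∈ Set.Ioc 0 c₁
    · have m2 : t ∉ Set.Ioc c₁ c₂ := by
        simp only [Set.mem_Ioc] at m1 ⊢
        push_neg
        intro h
        linarith [m1.2]
      rw [Set.indicator_of_mem m1, Set.indicator_of_notMem m2, add_zero, hG1 t m1]
    · by_cases m2 : t ∈ Set.Ioc c₁ c₂
      · rw [Set.indicator_of_notMem m1, Set.indicator_of_mem m2, zero_add, hG2 t m2]
      · rw [Set.indicator_of_notMem m1, Set.indicator_of_notMem m2, add_zero,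
          hG0 t h0 m1 m2]
  rw [lintegral_congr_ae hae]
  simp only [Pi.add_apply]
  rw [lintegral_add_left (show Measurable ((Set.Ioc 0 c₁).indicator
        (fun t => ENNReal.ofReal (f₁ t))) from
      (ENNReal.measurable_ofReal.comp hf₁.measurable).indicator measurableSet_Ioc),
    lintegral_indicator measurableSet_Ioc, lintegral_indicator measurableSet_Ioc,
    lint_Ioc hf₁ h₁ hn₁, lint_Ioc hf₂ h₂ hn₂]


lemma sum_trm_self (m : ℕ) (c : ℝ) :
    ∑ j ∈ Finset.Icc 0 m, trm m c c j = c ^ m / Nat.factorial m := by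
  rw [Finset.sum_eq_single m]
  · simp [trm]
  · intro j hj hjm
    have h : m - j ≠ 0 := by
      simp only [Finset.mem_Icc] at hj; omega
    simp [trm, sub_self, zero_pow h]
  · intro h
    exact absurd (Finset.mem_Icc.2 ⟨Nat.zero_le m, le_rfl⟩) h

lemma vol_cset (m : ℕ) : ∀ (k : ℕ) (p b : ℝ), k ≤ m → 0 ≤ p → p ≤ b →
    volume (cset m k p b) = ENNReal.ofReal (∑ j ∈ Finset.Icc k m, trm m p b j) := by
  induction m with
  | zero =>
    intro k p b hk hp hpb
    interval_cases k
    have h : cset 0 0 p b = Set.univ := by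
      ext x
      simp [cset, hp, le_trans hp hpb]
    rw [h]
    simp only [Finset.Icc_self, Finset.sum_singleton]
    rw [show trm 0 p b 0 = 1 by simp [trm], ENNReal.ofReal_one]
    rw [show (volume : Measure (Fin 0 → ℝ)) = Measure.pi (fun _ => volume) from rfl,
      Measure.pi_univ]
    simp
  | succ m ih =>
    intro k p b hk hp hpb
    have hb : 0 ≤ b := le_trans hp hpb
    set e := MeasurableEquiv.piFinSuccAbove (fun _ : Fin (m+1) => ℝ) (Fin.last m) with he
    have hmp := volume_preserving_piFinSuccAbove (fun _ : Fin (m+1) => ℝ) (Fin.last m)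
    set sl : ℝ → Set (Fin m → ℝ) :=
      fun t => {y : Fin m → ℝ | (Fin.last m).insertNth t y ∈ cset (m+1) k p b} with hsl
    have key : volume (cset (m+1) k p b) = ∫⁻ t : ℝ, volume (sl t) := by
      rw [← (hmp.symm e).measure_preimage_equiv (cset (m+1) k p b)]
      rw [Measure.volume_eq_prod,
        Measure.prod_apply ((measurableSet_cset (m+1) k p b).preimage e.symm.measurable)]
      exact lintegral_congr fun t => rfl
    have hmem : ∀ (t : ℝ) (y : Fin m → ℝ),
        ((Fin.last m).insertNth t y ∈ cset (m+1) k p b) ↔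
        ((0 ≤ t ∧ ∀ i, 0 ≤ y i) ∧
          ((if m < k then t else 0)
            + ∑ i ∈ Finset.univ.filter (fun i : Fin m => (i:ℕ) < k), y i ≤ p) ∧
          (t + ∑ i, y i ≤ b)) := by
      intro t y
      simp only [cset, Set.mem_setOf_eq]
      rw [Fin.forall_iff_succAbove (Fin.last m),
        Fin.sum_univ_succAbove (fun i => (Fin.last m).insertNth t y i) (Fin.last m),
        Finset.sum_filter, Finset.sum_filter,
        Fin.sum_univ_succAbove
          (fun i => if (i:ℕ) < k then (Fin.last m).insertNth t y i else 0) (Fin.last m)]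
      simp [Fin.insertNth_apply_same, Fin.insertNth_apply_succAbove, Fin.succAbove_last,
        Fin.val_last, Fin.coe_castSucc]
    rw [key]
    by_cases hkm : k ≤ m
    · -- peeled coordinate is outside the first k coordinates
      have hG1 : ∀ t ∈ Set.Ioc 0 (b - p), volume (sl t)
          = ENNReal.ofReal (∑ j ∈ Finset.Icc k m, trm m p (b - t) j) := by
        intro t ht
        rw [Set.mem_Ioc] at ht
        have hset : sl t = cset m k p (b - t) := by
          ext y
          simp only [hsl, Set.mem_setOf_eq, hmem t y, if_neg (by omega : ¬ m < k), zero_add]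
          simp only [cset, Set.mem_setOf_eq]
          constructor
          · rintro ⟨⟨-, h0⟩, h1, h2⟩
            exact ⟨h0, h1, by linarith⟩
          · rintro ⟨h0, h1, h2⟩
            exact ⟨⟨le_of_lt ht.1, h0⟩, h1, by linarith⟩
        rw [hset, ih k p (b - t) hkm hp (by linarith [ht.2])]
      have hG2 : ∀ t ∈ Set.Ioc (b - p) b, volume (sl t)
          = ENNReal.ofReal ((b - t) ^ m / Nat.factorial m) := by
        intro t ht
        rw [Set.mem_Ioc] at ht
        have hset : sl t = cset m 0 (b - t) (b - t) := by
          ext y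
          simp only [hsl, Set.mem_setOf_eq, hmem t y, if_neg (by omega : ¬ m < k), zero_add]
          simp only [cset, Set.mem_setOf_eq]
          have hz : ∑ i ∈ Finset.univ.filter (fun i : Fin m => (i:ℕ) < 0), y i = 0 := by
            simp
          constructor
          · rintro ⟨⟨-, h0⟩, h1, h2⟩
            exact ⟨h0, by rw [hz]; linarith, by linarith⟩
          · rintro ⟨h0, h1, h2⟩
            have hle : ∑ i ∈ Finset.univ.filter (fun i : Fin m => (i:ℕ) < k), y i
                ≤ ∑ i, y i :=
              Finset.sum_le_sum_of_subset_of_nonneg (Finset.filter_subset _ _)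
                (fun i _ _ => h0 i)
            have h0t : 0 ≤ t := by linarith [ht.1, sub_nonneg.2 hpb]
            exact ⟨⟨h0t, h0⟩, by linarith, by linarith⟩
        rw [hset, ih 0 (b - t) (b - t) (Nat.zero_le m) (by linarith [ht.2]) le_rfl,
          sum_trm_self]
      have hG0 : ∀ t : ℝ, t ≠ 0 → t ∉ Set.Ioc 0 (b - p) → t ∉ Set.Ioc (b - p) b →
          volume (sl t) = 0 := by
        intro t ht0 h1 h2
        have hset : sl t = ∅ := by
          ext y
          simp only [hsl, Set.mem_setOf_eq, hmem t y, Set.mem_empty_iff_false, iff_false]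
          rintro ⟨⟨htn, h0⟩, -, hsum⟩
          have hnn : 0 ≤ ∑ i, y i := Finset.sum_nonneg fun i _ => h0 i
          rw [Set.mem_Ioc, not_and_or, not_lt, not_le] at h1 h2
          have hpos : 0 < t := lt_of_le_of_ne htn (Ne.symm ht0)
          rcases h1 with h1 | h1
          · linarith
          · rcases h2 with h2 | h2 <;> linarith
        rw [hset]
        simp
      have hc1 : 0 ≤ b - p := by linarith
      have hc2 : b - p ≤ b := by linarith
      have hf₁ : Continuous fun t : ℝ => ∑ j ∈ Finset.Icc k m, trm m p (b - t) j := by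
        apply continuous_finset_sum
        intro j _
        unfold trm
        fun_prop
      have hf₂ : Continuous fun t : ℝ => (b - t) ^ m / Nat.factorial m := by fun_prop
      rw [lintegral_two_piece hc1 hc2 hf₁ hf₂
        (fun t ht => Finset.sum_nonneg fun j _ =>
          trm_nonneg hp (by rw [Set.mem_Ioc] at ht; linarith [ht.2]) j)
        (fun t ht => by
          rw [Set.mem_Ioc] at ht
          exact div_nonneg (pow_nonneg (by linarith [ht.2]) m) (by positivity))
        hG1 hG2 hG0]
      have hI1 : ∫ t in (0:ℝ)..(b-p), ∑ j ∈ Finset.Icc k m, trm m p (b - t) j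
          = ∑ j ∈ Finset.Icc k m, trm (m+1) p b j := by
        rw [intervalIntegral.integral_finset_sum]
        · refine Finset.sum_congr rfl fun j hj => ?_
          rw [Finset.mem_Icc] at hj
          have h1 : ∀ t : ℝ, trm m p (b - t) j
              = (p ^ j / (Nat.factorial j * Nat.factorial (m - j))) * ((b - p) - t) ^ (m - j) := by
            intro t
            unfold trm
            rw [show b - t - p = b - p - t from by ring]
            ring
          simp_rw [h1]
          rw [intervalIntegral.integral_const_mul, integral_sub_pow]
          unfold trm
          have hmj : m + 1 - j = (m - j) + 1 := by omega
          rw [hmj, Nat.factorial_succ]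
          have e1 : (Nat.factorial j : ℝ) ≠ 0 := Nat.cast_ne_zero.2 (Nat.factorial_ne_zero j)
          have e2 : (Nat.factorial (m - j) : ℝ) ≠ 0 :=
            Nat.cast_ne_zero.2 (Nat.factorial_ne_zero (m - j))
          have e4 : (0:ℝ) < (Nat.factorial j : ℝ) * Nat.factorial (m - j) *
              (((m - j : ℕ) : ℝ) + 1) := by
            have := Nat.cast_pos (α := ℝ) |>.2 (Nat.factorial_pos j)
            have := Nat.cast_pos (α := ℝ) |>.2 (Nat.factorial_pos (m - j))
            positivity
          push_cast
          rw [sub_zero, div_mul_div_comm, div_eq_div_iff (by linarith) (by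
            have h5 := Nat.cast_pos (α := ℝ) |>.2 (Nat.factorial_pos j)
            have h6 := Nat.cast_pos (α := ℝ) |>.2 (Nat.factorial_pos (m - j))
            positivity)]
          ring
        · intro j hj
          apply Continuous.intervalIntegrable
          unfold trm
          fun_prop
      have hI2 : ∫ t in (b-p)..b, (b - t) ^ m / Nat.factorial m
          = trm (m+1) p b (m+1) := by
        simp_rw [div_eq_mul_inv]
        rw [intervalIntegral.integral_mul_const, integral_sub_pow]
        unfold trm
        rw [show b - (b - p) = p from by ring, Nat.sub_self, pow_zero, Nat.factorial_succ,
          Nat.factorial_zero]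
        have e1 : (0:ℝ) < (Nat.factorial m : ℝ) := Nat.cast_pos.2 (Nat.factorial_pos m)
        push_cast
        have e2 : (↑m + 1 : ℝ) ≠ 0 := by positivity
        field_simp
      rw [hI1, hI2, ← ENNReal.ofReal_add
        (Finset.sum_nonneg fun j _ => trm_nonneg hp hpb j) (trm_nonneg hp hpb (m+1))]
      congr 1
      exact (Finset.sum_Icc_succ_top hk (trm (m+1) p b)).symm
    · -- k = m + 1 : peeled coordinate is among the first k coordinates
      have hk1 : k = m + 1 := by omega
      subst hk1
      have hfu : ∀ (K : ℕ), m ≤ K →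
          Finset.univ.filter (fun i : Fin m => (i:ℕ) < K) = Finset.univ :=
        fun K hK => Finset.filter_true_of_mem fun i _ => lt_of_lt_of_le i.isLt hK
      have hG1 : ∀ t ∈ Set.Ioc 0 p, volume (sl t)
          = ENNReal.ofReal ((p - t) ^ m / Nat.factorial m) := by
        intro t ht
        rw [Set.mem_Ioc] at ht
        have hset : sl t = cset m m (p - t) (b - t) := by
          ext y
          simp only [hsl, Set.mem_setOf_eq, hmem t y, if_pos (Nat.lt_succ_self m),
            hfu (m+1) (Nat.le_succ m)]
          simp only [cset, Set.mem_setOf_eq, hfu m le_rfl]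
          constructor
          · rintro ⟨⟨-, h0⟩, h1, h2⟩
            exact ⟨h0, by linarith, by linarith⟩
          · rintro ⟨h0, h1, h2⟩
            exact ⟨⟨le_of_lt ht.1, h0⟩, by linarith, by linarith⟩
        rw [hset, ih m (p - t) (b - t) le_rfl (by linarith [ht.2]) (by linarith),
          Finset.Icc_self, Finset.sum_singleton]
        congr 1
        simp [trm]
      have hempty : ∀ t : ℝ, t < 0 ∨ p < t → sl t = ∅ := by
        intro t ht
        ext y
        simp only [hsl, Set.mem_setOf_eq, hmem t y, if_pos (Nat.lt_succ_self m),
          Set.mem_empty_iff_false, iff_false]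
        rintro ⟨⟨htn, h0⟩, h1, -⟩
        have hnn : 0 ≤ ∑ i ∈ Finset.univ.filter (fun i : Fin m => (i:ℕ) < m+1), y i :=
          Finset.sum_nonneg fun i _ => h0 i
        rcases ht with ht | ht <;> linarith
      have hG2 : ∀ t ∈ Set.Ioc p b, volume (sl t)
          = ENNReal.ofReal ((fun _ : ℝ => (0:ℝ)) t) := by
        intro t ht
        rw [Set.mem_Ioc] at ht
        rw [hempty t (Or.inr ht.1)]
        simp
      have hG0 : ∀ t : ℝ, t ≠ 0 → t ∉ Set.Ioc 0 p → t ∉ Set.Ioc p b →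
          volume (sl t) = 0 := by
        intro t ht0 h1 h2
        rw [Set.mem_Ioc, not_and_or, not_lt, not_le] at h1
        have hcase : t < 0 ∨ p < t := by
          rcases h1 with h | h
          · exact Or.inl (lt_of_le_of_ne h ht0)
          · exact Or.inr h
        rw [hempty t hcase]
        simp
      have hf₁ : Continuous fun t : ℝ => (p - t) ^ m / Nat.factorial m := by fun_prop
      rw [lintegral_two_piece hp hpb hf₁ continuous_const
        (fun t ht => by
          rw [Set.mem_Ioc] at ht
          exact div_nonneg (pow_nonneg (by linarith [ht.2]) m) (by positivity))
        (fun t _ => le_rfl) hG1 hG2 hG0]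
      rw [intervalIntegral.integral_const, smul_zero, ENNReal.ofReal_zero, add_zero]
      have hI : ∫ t in (0:ℝ)..p, (p - t) ^ m / Nat.factorial m
          = p ^ (m+1) / ((m+1) * Nat.factorial m) := by
        simp_rw [div_eq_mul_inv]
        rw [intervalIntegral.integral_mul_const, integral_sub_pow, sub_zero]
        push_cast
        have e2 : (↑m + 1 : ℝ) ≠ 0 := by positivity
        have e1 : (0:ℝ) < (Nat.factorial m : ℝ) := Nat.cast_pos.2 (Nat.factorial_pos m)
        field_simp
      rw [hI]
      congr 1
      rw [Finset.Icc_self, Finset.sum_singleton]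
      simp only [trm, Nat.sub_self, pow_zero, mul_one, Nat.factorial_zero, Nat.factorial_succ]
      push_cast
      try ring

lemma sum_trm_one (m : ℕ) (p : ℝ) :
    ∑ j ∈ Finset.Icc 0 m, trm m p 1 j = 1 / Nat.factorial m := by
  have hIcc : Finset.Icc 0 m = Finset.range (m+1) := by
    ext a; simp [Nat.lt_succ_iff]
  rw [hIcc]
  have h : ∀ j ∈ Finset.range (m+1), trm m p 1 j
      = p ^ j * (1 - p) ^ (m - j) * (m.choose j : ℝ) / Nat.factorial m := by
    intro j hj
    rw [Finset.mem_range, Nat.lt_succ_iff] at hj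
    have hfac : ((m.choose j : ℝ) * Nat.factorial j * Nat.factorial (m - j))
        = (Nat.factorial m : ℝ) := by
      exact_mod_cast congrArg (Nat.cast (R := ℝ)) (Nat.choose_mul_factorial_mul_factorial hj)
    unfold trm
    have d1 : (0:ℝ) < (Nat.factorial j : ℝ) * Nat.factorial (m - j) := by
      have h5 := Nat.cast_pos (α := ℝ) |>.2 (Nat.factorial_pos j)
      have h6 := Nat.cast_pos (α := ℝ) |>.2 (Nat.factorial_pos (m - j))
      positivity
    have d2 : (0:ℝ) < (Nat.factorial m : ℝ) := Nat.cast_pos.2 (Nat.factorial_pos m)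
    rw [div_eq_div_iff d1.ne' d2.ne']
    linear_combination (-(p ^ j * (1 - p) ^ (m - j))) * hfac
  rw [Finset.sum_congr rfl h, ← Finset.sum_div, ← add_pow]
  rw [show p + (1 - p) = 1 from by ring, one_pow]

lemma final_sum (m k : ℕ) (p : ℝ) (hk1 : 1 ≤ k) (hkm : k ≤ m) :
    ∑ j ∈ Finset.Icc k m, trm m p 1 j
      = (1 / Nat.factorial m) * (1 - (1 - p) ^ m)
        - ∑ j ∈ Finset.Icc 1 (k-1), (1 - p) ^ (m - j) * p ^ j /
            (Nat.factorial j * Nat.factorial (m - j)) := by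
  have hsplit : Finset.Icc 0 m = insert 0 (Finset.Icc 1 (k-1) ∪ Finset.Icc k m) := by
    ext a
    simp only [Finset.mem_Icc, Finset.mem_insert, Finset.mem_union]
    omega
  have hdis2 : Disjoint (Finset.Icc 1 (k-1)) (Finset.Icc k m) := by
    rw [Finset.disjoint_left]
    intro a ha hb
    rw [Finset.mem_Icc] at ha
    rw [Finset.mem_Icc] at hb
    omega
  have h0 : (0:ℕ) ∉ Finset.Icc 1 (k-1) ∪ Finset.Icc k m := by
    simp only [Finset.mem_union, Finset.mem_Icc]
    omega
  have hbin := sum_trm_one m p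
  rw [hsplit, Finset.sum_insert h0, Finset.sum_union hdis2] at hbin
  have ht0 : trm m p 1 0 = (1-p)^m / Nat.factorial m := by
    simp [trm]
  have hcomm : ∑ j ∈ Finset.Icc 1 (k-1), (1 - p) ^ (m - j) * p ^ j /
      (Nat.factorial j * Nat.factorial (m - j)) = ∑ j ∈ Finset.Icc 1 (k-1), trm m p 1 j :=
    Finset.sum_congr rfl fun j _ => by unfold trm; ring
  rw [ht0] at hbin
  have hx : (1 / (Nat.factorial m : ℝ)) * (1 - (1 - p) ^ m)
      = 1 / (Nat.factorial m : ℝ) - (1-p)^m / Nat.factorial m := by ring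
  rw [hcomm, hx]
  linarith [hbin]

end CornerSimplexAux

/-- Iterated integral identity: for `p ∈ (0,1)` and integers `1 ≤ n₀ < n`, the Lebesgue volume of
`{x ∈ ℝ^{n-1} : x i ≥ 0, ∑_{i=1}^{n-1} x i ≤ 1, ∑_{i=1}^{n₀} x i ≤ p}` equals
`(1/(n-1)!)(1 - (1-p)^{n-1}) - ∑_{j=1}^{n₀-1} (1-p)^{n-1-j} p^j / (j! (n-1-j)!)`. -/
theorem volume_truncated_corner_simplex (n n₀ : ℕ) (hn₀ : 1 ≤ n₀) (hn : n₀ < n)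
    (p : ℝ) (hp : 0 < p) (hp1 : p < 1) :
    volume ({x : EuclideanSpace ℝ (Fin (n - 1)) |
        (∀ i, 0 ≤ x i) ∧ (∑ i, x i ≤ 1) ∧
        (∑ i ∈ Finset.univ.filter (fun i : Fin (n - 1) => (i : ℕ) < n₀), x i ≤ p)}) =
      ENNReal.ofReal
        ((1 / Nat.factorial (n - 1)) * (1 - (1 - p) ^ (n - 1)) -
          ∑ j ∈ Finset.Icc 1 (n₀ - 1),
            (1 - p) ^ (n - 1 - j) * p ^ j /
              (Nat.factorial j * Nat.factorial (n - 1 - j))) := by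
  have hm : n₀ ≤ n - 1 := by omega
  have hSE : {x : EuclideanSpace ℝ (Fin (n - 1)) |
        (∀ i, 0 ≤ x i) ∧ (∑ i, x i ≤ 1) ∧
        (∑ i ∈ Finset.univ.filter (fun i : Fin (n - 1) => (i : ℕ) < n₀), x i ≤ p)}
      = (MeasurableEquiv.toLp 2 (Fin (n-1) → ℝ)).symm ⁻¹' (CornerSimplexAux.cset (n-1) n₀ p 1) := by
    ext x
    simp only [Set.mem_setOf_eq, Set.mem_preimage, CornerSimplexAux.cset]
    constructor
    · rintro ⟨a, b, c⟩; exact ⟨a, c, b⟩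
    · rintro ⟨a, b, c⟩; exact ⟨a, c, b⟩
  rw [hSE,
    (EuclideanSpace.volume_preserving_symm_measurableEquiv_toLp (Fin (n-1))).measure_preimage_equiv,
    CornerSimplexAux.vol_cset (n-1) n₀ p 1 hm (le_of_lt hp) (le_of_lt hp1)]
  exact congrArg ENNReal.ofReal (CornerSimplexAux.final_sum (n-1) n₀ p hn₀ hm)
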